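/- The following identity holds: (μ - 1/3)·∫_{-∞}^{∞} q(s) ds = ∫_{-∞}^{∞} q'(s)² ds + (a/2)·∫_{-∞}^{∞} q(s)² ds. -/

import Mathlib

open MeasureTheory Filter Real Set Topology

lemma freq_small_aux {f : ℝ → ℝ} (hf : Integrable f)
    {ε : ℝ} (hε : 0 < ε) (S : ℝ) : ∃ s, S ≤ s ∧ 1 ≤ s ∧ s * f s < ε := by
  by_contra h
  push_neg at h
  set T := max S 1 with hT
  have hT1 : (1:ℝ) ≤ T := le_max_right _ _
  have hbig : ∀ s ∈ Ioi T, ε * s⁻¹ ≤ f s := by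
    intro s hs
    have hs1 : 1 ≤ s := hT1.trans (le_of_lt hs)
    have hs0 : 0 < s := lt_of_lt_of_le one_pos hs1
    have := h s ((le_max_left S 1).trans hs.le) hs1
    rw [mul_comm ε s⁻¹, inv_mul_le_iff₀ hs0]
    linarith [mul_comm s (f s)]
  have hinv : IntegrableOn (fun s : ℝ => ε * s⁻¹) (Ioi T) := by
    refine (hf.integrableOn).mono' ?_ ?_
    · exact (measurable_const.mul measurable_inv).aestronglyMeasurable
    · filter_upwards [ae_restrict_mem measurableSet_Ioi] with s hs
      have hs0 : (0:ℝ) < s := lt_of_lt_of_le one_pos (hT1.trans hs.le)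
      have : 0 ≤ ε * s⁻¹ := by positivity
      rw [Real.norm_eq_abs, abs_of_nonneg this]
      exact hbig s hs
  have hinv' : IntegrableOn (fun s : ℝ => s⁻¹) (Ioi T) := by
    have h2 : IntegrableOn (fun s : ℝ => ε⁻¹ * (ε * s⁻¹)) (Ioi T) := hinv.smul (ε⁻¹)
    refine h2.congr (Filter.Eventually.of_forall fun s => ?_)
    show ε⁻¹ * (ε * s⁻¹) = s⁻¹
    rw [← mul_assoc, inv_mul_cancel₀ hε.ne', one_mul]
  exact not_IntegrableOn_Ioi_inv hinv'

theorem stmt_8 (a μ A : ℝ) (ha : 0 < a) (hμ : 1 / 3 < μ) (hA : 0 < A)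
    (q : ℝ → ℝ) (hq : ContDiff ℝ 2 q)
    (hode : ∀ s : ℝ, deriv (deriv q) s * q s + a * s * deriv q s * q s
      + μ * q s + (1 / 3) * s * deriv q s = 0)
    (hq0 : q 0 = A) (hq0' : deriv q 0 = 0)
    (hpos : ∀ s : ℝ, 0 < q s)
    (hint : Integrable q)
    (hint2 : Integrable (fun s : ℝ => q s ^ 2))
    (hintd : Integrable (fun s : ℝ => deriv q s ^ 2)) :
    (μ - 1 / 3) * ∫ s : ℝ, q s
      = (∫ s : ℝ, deriv q s ^ 2) + (a / 2) * ∫ s : ℝ, q s ^ 2 := by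
  -- regularity
  have h2 : ContDiff ℝ (1 + 1) q := by norm_num; exact hq
  have hdq : Differentiable ℝ q := hq.differentiable (by norm_num)
  have hc1 : ContDiff ℝ 1 (deriv q) := (contDiff_succ_iff_deriv.mp h2).2.2
  have hdq' : Differentiable ℝ (deriv q) := hc1.differentiable (by norm_num)
  have hcq : Continuous q := hq.continuous
  have hcq' : Continuous (deriv q) := hc1.continuous
  -- key functions
  set u : ℝ → ℝ := fun s => deriv q s * q s with hu_def
  set w : ℝ → ℝ := fun s => a / 2 * q s ^ 2 + 1 / 3 * q s with hw_def
  set G : ℝ → ℝ := fun s => u s + s * w s with hG_def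
  set g : ℝ → ℝ := fun s => deriv q s ^ 2 + a / 2 * q s ^ 2 - (μ - 1 / 3) * q s with hg_def
  have hw_nonneg : ∀ s, 0 ≤ w s := by
    intro s
    have := (hpos s).le
    have h2 := sq_nonneg (q s)
    simp only [hw_def]
    nlinarith
  have hGd : ∀ s, HasDerivAt G (g s) s := by
    intro s
    have h1 : HasDerivAt q (deriv q s) s := (hdq s).hasDerivAt
    have h1' : HasDerivAt (deriv q) (deriv (deriv q) s) s := (hdq' s).hasDerivAt
    have hw : HasDerivAt (fun t : ℝ => a / 2 * q t ^ 2 + 1 / 3 * q t)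
        (a / 2 * (2 * q s ^ 1 * deriv q s) + 1 / 3 * deriv q s) s :=
      ((h1.pow 2).const_mul (a / 2)).add (h1.const_mul (1 / 3))
    have hD : HasDerivAt G
        ((deriv (deriv q) s * q s + deriv q s * deriv q s) +
          (1 * w s + s * (a / 2 * (2 * q s ^ 1 * deriv q s) + 1 / 3 * deriv q s))) s :=
      (h1'.mul h1).add ((hasDerivAt_id s).mul hw)
    convert hD using 1
    have hos := hode s
    simp only [hg_def, hw_def]
    ring_nf
    ring_nf at hos
    linarith
  have hgcont : Continuous g := by
    simp only [hg_def]
    fun_prop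
  have hgint : Integrable g :=
    (hintd.add (hint2.const_mul (a / 2))).sub (hint.const_mul (μ - 1 / 3))
  have hFTC : ∀ x y : ℝ, ∫ t in x..y, g t = G y - G x := fun x y =>
    intervalIntegral.integral_eq_sub_of_hasDerivAt (fun t _ => hGd t)
      (hgcont.intervalIntegrable x y)
  -- limits of G at ±∞
  have htop : Tendsto G atTop (𝓝 (G 0 + ∫ t in Ioi (0 : ℝ), g t)) := by
    have h1 := intervalIntegral_tendsto_integral_Ioi 0 hgint.integrableOn tendsto_id
    have h2 : Tendsto (fun s : ℝ => G 0 + ∫ t in (0:ℝ)..(id s), g t) atTop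
        (𝓝 (G 0 + ∫ t in Ioi (0 : ℝ), g t)) := h1.const_add (G 0)
    refine h2.congr fun s => ?_
    simp only [id_eq]
    rw [hFTC 0 s]; ring
  have hbot : Tendsto G atBot (𝓝 (G 0 - ∫ t in Iic (0 : ℝ), g t)) := by
    have h1 := intervalIntegral_tendsto_integral_Iic 0 hgint.integrableOn tendsto_id
    have h2 : Tendsto (fun s : ℝ => G 0 - ∫ t in (id s)..(0:ℝ), g t) atBot
        (𝓝 (G 0 - ∫ t in Iic (0 : ℝ), g t)) := h1.const_sub (G 0)
    refine h2.congr fun s => ?_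
    simp only [id_eq]
    rw [hFTC s 0]; ring
  -- the dominating integrable function
  have hu_int : Integrable u := by
    refine (((hintd.add hint2).const_mul (1/2)).mono' ((hcq'.mul hcq).aestronglyMeasurable) ?_)
    refine Filter.Eventually.of_forall fun s => ?_
    have h1 : |deriv q s * q s| ≤ 1/2 * (deriv q s ^ 2 + q s ^ 2) := by
      rw [abs_mul]
      nlinarith [sq_nonneg (|deriv q s| - |q s|), sq_abs (deriv q s), sq_abs (q s),
        abs_nonneg (deriv q s), abs_nonneg (q s)]
    simpa [Real.norm_eq_abs, hu_def, abs_mul] using h1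
  have hw_int : Integrable w := (hint2.const_mul (a/2)).add (hint.const_mul (1/3))
  set h : ℝ → ℝ := fun s => |u s| + w s with hh_def
  have hh_int : Integrable h := hu_int.abs.add hw_int
  have hh_nonneg : ∀ s, 0 ≤ h s := fun s => add_nonneg (abs_nonneg _) (hw_nonneg s)
  -- |G s| is controlled by s * h s for s ≥ 1
  have hGbound : ∀ s : ℝ, 1 ≤ s → |G s| ≤ 2 * (s * h s) := by
    intro s hs1
    have hs0 : (0:ℝ) < s := lt_of_lt_of_le one_pos hs1
    have h1 : |G s| ≤ |u s| + |s * w s| := abs_add_le _ _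
    have h2 : |s * w s| = s * w s := abs_of_nonneg (mul_nonneg hs0.le (hw_nonneg s))
    have h3 : |u s| ≤ s * |u s| := le_mul_of_one_le_left (abs_nonneg _) hs1
    have h4 : s * h s = s * |u s| + s * w s := by simp only [hh_def]; ring
    nlinarith [mul_nonneg hs0.le (abs_nonneg (u s)), mul_nonneg hs0.le (hw_nonneg s),
      mul_nonneg hs0.le (hh_nonneg s)]
  have hGbound' : ∀ s : ℝ, 1 ≤ s → |G (-s)| ≤ 2 * (s * h (-s)) := by
    intro s hs1
    have hs0 : (0:ℝ) < s := lt_of_lt_of_le one_pos hs1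
    have h1 : |G (-s)| ≤ |u (-s)| + |(-s) * w (-s)| := abs_add_le _ _
    have h2 : |(-s) * w (-s)| = s * w (-s) := by
      rw [abs_mul, abs_neg, abs_of_nonneg hs0.le, abs_of_nonneg (hw_nonneg (-s))]
    have h3 : |u (-s)| ≤ s * |u (-s)| := le_mul_of_one_le_left (abs_nonneg _) hs1
    have h4 : s * h (-s) = s * |u (-s)| + s * w (-s) := by simp only [hh_def]; ring
    nlinarith [mul_nonneg hs0.le (abs_nonneg (u (-s))), mul_nonneg hs0.le (hw_nonneg (-s)),
      mul_nonneg hs0.le (hh_nonneg (-s))]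
  -- the limit at +∞ is zero
  have hLtop : G 0 + (∫ t in Ioi (0 : ℝ), g t) = 0 := by
    set L := G 0 + ∫ t in Ioi (0 : ℝ), g t with hLdef
    have key : ∀ ε : ℝ, 0 < ε → |L| < 3 * ε := by
      intro ε hε
      obtain ⟨S, hS⟩ := eventually_atTop.mp (htop (Metric.ball_mem_nhds _ hε))
      obtain ⟨s, hsS, hs1, hsmall⟩ := freq_small_aux hh_int hε S
      have hdist : |G s - L| < ε := by
        have := hS s hsS
        rwa [Metric.mem_ball, Real.dist_eq] at this
      have hGs : |G s| ≤ 2 * (s * h s) := hGbound s hs1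
      have htri : |L| ≤ |G s| + |G s - L| := by
        have h0 : L = G s - (G s - L) := by ring
        calc |L| = |G s - (G s - L)| := by rw [← h0]
          _ ≤ |G s| + |G s - L| := abs_sub _ _
      linarith
    by_contra hL0
    have habs : 0 < |L| := abs_pos.mpr hL0
    have := key (|L| / 3) (by linarith)
    linarith
  -- the limit at -∞ is zero
  have hLbot : G 0 - (∫ t in Iic (0 : ℝ), g t) = 0 := by
    set L := G 0 - ∫ t in Iic (0 : ℝ), g t with hLdef
    have hhneg_int : Integrable (fun s : ℝ => h (-s)) := hh_int.comp_neg
    have key : ∀ ε : ℝ, 0 < ε → |L| < 3 * ε := by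
      intro ε hε
      obtain ⟨S, hS⟩ := eventually_atBot.mp (hbot (Metric.ball_mem_nhds _ hε))
      obtain ⟨s, hsS, hs1, hsmall⟩ := freq_small_aux hhneg_int hε (max 1 (-S))
      have hsS' : -s ≤ S := by
        have : -S ≤ s := (le_max_right 1 (-S)).trans hsS
        linarith
      have hdist : |G (-s) - L| < ε := by
        have := hS (-s) hsS'
        rwa [Metric.mem_ball, Real.dist_eq] at this
      have hGs : |G (-s)| ≤ 2 * (s * h (-s)) := hGbound' s hs1
      have htri : |L| ≤ |G (-s)| + |G (-s) - L| := by
        have h0 : L = G (-s) - (G (-s) - L) := by ring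
        calc |L| = |G (-s) - (G (-s) - L)| := by rw [← h0]
          _ ≤ |G (-s)| + |G (-s) - L| := abs_sub _ _
      linarith
    by_contra hL0
    have habs : 0 < |L| := abs_pos.mpr hL0
    have := key (|L| / 3) (by linarith)
    linarith
  -- total integral of g is zero
  have hgzero : (∫ s : ℝ, g s) = 0 := by
    rw [← intervalIntegral.integral_Iic_add_Ioi hgint.integrableOn hgint.integrableOn]
    linarith
  -- unfold g in the integral
  have hsplit : (∫ s : ℝ, g s)
      = (∫ s : ℝ, deriv q s ^ 2) + (a / 2) * (∫ s : ℝ, q s ^ 2)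
        - (μ - 1 / 3) * ∫ s : ℝ, q s := by
    have i3 : Integrable (fun s : ℝ => a / 2 * q s ^ 2) := hint2.const_mul (a / 2)
    have i1 : Integrable (fun s : ℝ => deriv q s ^ 2 + a / 2 * q s ^ 2) := by
      exact hintd.add i3
    have i2 : Integrable (fun s : ℝ => (μ - 1 / 3) * q s) := hint.const_mul (μ - 1 / 3)
    simp only [hg_def]
    rw [integral_sub i1 i2, integral_add hintd i3, integral_const_mul, integral_const_mul]
  rw [hsplit] at hgzero
  linarith
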